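/- Let g be a symmetric unimodal real random variable centered at μ ≠ 0 with E[|g - μ|^κ] ≤ σ^κ for some κ > 0, and let S := |μ|/σ. Then the failure probability q := P(sign(g) ≠ sign(μ)) satisfies: if S^κ ≥ κ^κ/(κ+1)^{κ-1} then q ≤ (1/2)(κ/(κ+1))^κ / S^κ; if S^κ ≤ κ^κ/(κ+1)^{κ-1} then q ≤ 1/2 - (1/2)·S/(κ+1)^{1/κ}. In both cases q < 1/2. -/

import Mathlib

open MeasureTheory Real Set Filter intervalIntegral
open scoped ENNReal NNReal


lemma amgm_aux {κ u : ℝ} (hκ : 0 < κ) (hu : 0 < u) (hu1 : u ≤ 1) :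
    (1 - u) * u ^ κ ≤ κ ^ κ / (κ + 1) ^ (κ + 1) := by
  have hκ1 : (0:ℝ) < κ + 1 := by linarith
  set p₁ : ℝ := (κ + 1) * (1 - u) with hp₁
  set p₂ : ℝ := (κ + 1) * u / κ with hp₂
  have hp₁n : 0 ≤ p₁ := by
    have : 0 ≤ 1 - u := by linarith
    positivity
  have hp₂n : 0 ≤ p₂ := by positivity
  have hgeom := Real.geom_mean_le_arith_mean2_weighted
    (by positivity : (0:ℝ) ≤ 1/(κ+1)) (by positivity : (0:ℝ) ≤ κ/(κ+1)) hp₁n hp₂n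
    (by field_simp; ring)
  have harith : 1/(κ+1) * p₁ + κ/(κ+1) * p₂ = 1 := by
    rw [hp₁, hp₂]; field_simp; ring
  rw [harith] at hgeom
  -- raise to power κ+1
  have key : p₁ * p₂ ^ κ ≤ 1 := by
    have h1 : (p₁ ^ (1/(κ+1)) * p₂ ^ (κ/(κ+1))) ^ (κ+1) ≤ 1 ^ (κ+1) :=
      Real.rpow_le_rpow (by positivity) hgeom (le_of_lt hκ1)
    rw [Real.one_rpow, Real.mul_rpow (by positivity) (by positivity),
      ← Real.rpow_mul hp₁n, ← Real.rpow_mul hp₂n] at h1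
    have e1 : 1/(κ+1) * (κ+1) = 1 := by field_simp
    have e2 : κ/(κ+1) * (κ+1) = κ := by field_simp
    rwa [e1, e2, Real.rpow_one] at h1
  -- now rewrite LHS
  have hu' : u = κ * p₂ / (κ + 1) := by rw [hp₂]; field_simp
  have h1u : 1 - u = p₁ / (κ + 1) := by rw [hp₁]; field_simp
  have hue : u ^ κ = p₂ ^ κ * (κ ^ κ / (κ+1) ^ κ) := by
    rw [hu', div_rpow (by positivity) (le_of_lt hκ1), Real.mul_rpow (le_of_lt hκ) hp₂n]
    ring
  rw [h1u, hue]
  have hpow : (κ+1) ^ (κ+1) = (κ+1) ^ κ * (κ+1) := by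
    rw [← Real.rpow_add_one (ne_of_gt hκ1)]
  rw [hpow, le_div_iff₀ (by positivity)]
  have hκκ : 0 ≤ κ ^ κ := by positivity
  calc p₁ / (κ + 1) * (p₂ ^ κ * (κ ^ κ / (κ + 1) ^ κ)) * ((κ + 1) ^ κ * (κ + 1))
      = (p₁ * p₂ ^ κ) * κ ^ κ := by
        field_simp
    _ ≤ 1 * κ ^ κ := by
        apply mul_le_mul_of_nonneg_right key hκκ
    _ = κ ^ κ := by ring



lemma amgm' {κ t₀ T : ℝ} (hκ : 0 < κ) (ht : 0 < t₀) (hT : t₀ ≤ T) :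
    (T - t₀) * t₀ ^ κ ≤ κ ^ κ / (κ + 1) ^ (κ + 1) * T ^ (κ + 1) := by
  have hT0 : 0 < T := lt_of_lt_of_le ht hT
  have hu : 0 < t₀ / T := by positivity
  have hu1 : t₀ / T ≤ 1 := (div_le_one hT0).mpr hT
  have h := amgm_aux hκ hu hu1
  have h2 : (1 - t₀/T) * (t₀/T) ^ κ * T ^ (κ+1) ≤ κ ^ κ / (κ + 1) ^ (κ + 1) * T ^ (κ+1) :=
    mul_le_mul_of_nonneg_right h (by positivity)
  have e : (1 - t₀/T) * (t₀/T) ^ κ * T ^ (κ+1) = (T - t₀) * t₀ ^ κ := by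
    rw [Real.div_rpow ht.le hT0.le, Real.rpow_add hT0, Real.rpow_one]
    have hTκ : (0:ℝ) < T ^ κ := Real.rpow_pos_of_pos hT0 κ
    have e1 : (1 - t₀/T) = (T - t₀)/T := by field_simp
    rw [e1, div_mul_div_comm, div_mul_eq_mul_div]
    rw [div_eq_iff (by positivity)]
    ring
  linarith [e ▸ h2]

lemma coreA {κ σ r t₀ T : ℝ} (hκ : 0 < κ) (hσ : 0 < σ) (hr : 0 ≤ r) (ht : 0 < t₀)
    (hT : t₀ ≤ T) (hmomc : 2*r*T^(κ+1) ≤ (κ+1)*σ^κ) :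
    r*(T - t₀) ≤ (1/2) * (κ/(κ+1))^κ * σ^κ / t₀^κ := by
  have hκ1 : (0:ℝ) < κ + 1 := by linarith
  have h1 : r * (T - t₀) * t₀ ^ κ ≤ κ ^ κ / (κ + 1) ^ (κ + 1) * (r * T ^ (κ + 1)) := by
    have h := mul_le_mul_of_nonneg_left (amgm' hκ ht hT) hr
    calc r * (T - t₀) * t₀ ^ κ = r * ((T - t₀) * t₀ ^ κ) := by ring
      _ ≤ r * (κ ^ κ / (κ + 1) ^ (κ + 1) * T ^ (κ + 1)) := h
      _ = κ ^ κ / (κ + 1) ^ (κ + 1) * (r * T ^ (κ + 1)) := by ring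
  have h2 : r * T ^ (κ+1) ≤ (κ+1) * σ ^ κ / 2 := by linarith
  have h3 : r * (T - t₀) * t₀ ^ κ ≤ κ ^ κ / (κ + 1) ^ (κ + 1) * ((κ+1) * σ ^ κ / 2) :=
    h1.trans (mul_le_mul_of_nonneg_left h2 (by positivity))
  rw [le_div_iff₀ (by positivity : (0:ℝ) < t₀ ^ κ)]
  refine h3.trans (le_of_eq ?_)
  rw [Real.div_rpow hκ.le hκ1.le, Real.rpow_add_one (ne_of_gt hκ1)]
  have : ((κ+1):ℝ) ^ κ ≠ 0 := (Real.rpow_pos_of_pos hκ1 κ).ne'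
  field_simp

lemma coreB {κ σ r t₀ T : ℝ} (hκ : 0 < κ) (hσ : 0 < σ) (hr : 0 < r) (ht : 0 < t₀)
    (hT : t₀ ≤ T) (hhalf : r*T ≤ 1/2)
    (hmomc : 2*r*T^(κ+1) ≤ (κ+1)*σ^κ)
    (hreg : t₀/σ ≤ κ * (κ+1)^(1/κ) / (κ+1)) :
    r*(T-t₀) ≤ 1/2 - t₀ / (2*σ*(κ+1)^(1/κ)) := by
  have hκ1 : (0:ℝ) < κ + 1 := by linarith
  have hT0 : 0 < T := lt_of_lt_of_le ht hT
  set E : ℝ := (κ+1)^(1/κ) with hE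
  have hE0 : 0 < E := by positivity
  set δ : ℝ := 2 * (r * T) with hδ
  have hδ0 : 0 < δ := by positivity
  have hδ1 : δ ≤ 1 := by rw [hδ]; linarith
  set p : ℝ := 1 + 1/κ with hp
  have hp1 : 1 ≤ p := by rw [hp]; nlinarith [one_div_pos.mpr hκ]
  set cs : ℝ := 1 / (2*σ*E) with hcs
  have hcsp : 0 < cs := by positivity
  have hm2 : δ * T ^ κ ≤ (κ+1) * σ ^ κ := by
    have he : 2*r*T^(κ+1) = δ * T ^ κ := by
      rw [Real.rpow_add_one (ne_of_gt hT0), hδ]; ring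
    linarith [he ▸ hmomc]
  have hB : 0 < δ^(1/κ) := by positivity
  have hTle : T ≤ E * σ / δ^(1/κ) := by
    have h1 : T ^ κ ≤ (κ+1) * σ ^ κ / δ := by
      rw [le_div_iff₀ hδ0]; linarith
    have h2 : (T ^ κ) ^ (1/κ) ≤ ((κ+1) * σ ^ κ / δ) ^ (1/κ) :=
      Real.rpow_le_rpow (by positivity) h1 (by positivity)
    rw [one_div, Real.rpow_rpow_inv hT0.le (ne_of_gt hκ)] at h2
    refine h2.trans (le_of_eq ?_)
    rw [hE, one_div, Real.div_rpow (by positivity) hδ0.le,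
      Real.mul_rpow hκ1.le (by positivity), Real.rpow_rpow_inv hσ.le (ne_of_gt hκ)]
  have hδp : δ ^ p = δ * δ ^ (1/κ) := by
    rw [hp, Real.rpow_add hδ0, Real.rpow_one]
  have hrge : δ ^ p * cs ≤ r := by
    have h2 : r * T ≤ r * (E * σ / δ^(1/κ)) := mul_le_mul_of_nonneg_left hTle hr.le
    rw [← mul_div_assoc, le_div_iff₀ hB] at h2
    have key : ∀ X : ℝ, 0 < X → r*T*X ≤ r*(E*σ) → δ * X * cs ≤ r := by
      intro X hX h2'
      rw [hcs, hδ]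
      have he : 2*(r*T)*X*(1/(2*σ*E)) = (r*T*X)/(σ*E) := by field_simp
      rw [he, div_le_iff₀ (by positivity)]
      nlinarith
    rw [hδp]
    exact key _ hB h2
  have hbern : 1 + p * (δ - 1) ≤ δ ^ p := by
    have h := one_add_mul_self_le_rpow_one_add
      (show (-1:ℝ) ≤ δ - 1 by linarith) hp1
    have e : 1 + (δ - 1) = δ := by ring
    rwa [e] at h
  have hpx : p * cs * t₀ ≤ 1/2 := by
    have hreg' : t₀ * (κ+1) ≤ κ * E * σ := by
      rw [div_le_div_iff₀ hσ hκ1] at hreg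
      rw [hE]; linarith
    have he : p * cs * t₀ = (t₀*(κ+1)) / (κ*(2*σ*E)) := by
      rw [hp, hcs]; field_simp
    rw [he, div_le_iff₀ (by positivity)]
    nlinarith
  -- assemble
  have h3 : r * T = δ / 2 := by rw [hδ]; ring
  have hq : r*(T-t₀) = δ/2 - r*t₀ := by rw [mul_sub, h3]
  have htcs : t₀ / (2*σ*E) = t₀ * cs := by rw [hcs]; ring
  rw [hq, htcs]
  have h4 : δ ^ p * cs * t₀ ≤ r * t₀ := mul_le_mul_of_nonneg_right hrge ht.le
  have h5 : (1 + p * (δ - 1)) * (cs * t₀) ≤ δ ^ p * (cs * t₀) :=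
    mul_le_mul_of_nonneg_right hbern (by positivity)
  have h6 : (1 - δ) * (p * cs * t₀) ≤ (1 - δ) * (1/2) :=
    mul_le_mul_of_nonneg_left hpx (show (0:ℝ) ≤ 1 - δ by linarith)
  have h4' : δ ^ p * (cs * t₀) ≤ r * t₀ := by rw [← mul_assoc]; exact h4
  ring_nf at h4' h5 h6 ⊢
  linarith [h4', h5, h6]


lemma key_integral {Ω : Type*} [MeasureSpace Ω] (hP : IsProbabilityMeasure (volume : Measure Ω))
    (X : Ω → ℝ) (hX : Measurable X) {κ σ : ℝ} (hκ : 0 < κ) (hσ : 0 < σ)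
    (hsymm' : ∀ t : ℝ, volume {ω | t < X ω} = volume {ω | t < - X ω})
    (hint : Integrable (fun ω => |X ω| ^ κ))
    (hmom : ∫ ω, |X ω| ^ κ ≤ σ ^ κ)
    {c r T : ℝ} (hr : 0 ≤ r) (hT : 0 < T) (hcrT : 0 ≤ c - r*T)
    (hmin : ∀ t ∈ Set.Ioc (0:ℝ) T, c - r*t ≤ (volume {ω | t < X ω}).toReal) :
    2*c*T^κ - 2*r*κ*T^(κ+1)/(κ+1) ≤ σ^κ := by
  have hκ1 : (0:ℝ) < κ + 1 := by linarith
  -- layer cake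
  have g_intble : ∀ t > (0:ℝ), IntervalIntegrable (fun s => κ * s^(κ-1)) volume 0 t :=
    fun t _ => (intervalIntegrable_rpow' (by linarith)).const_mul κ
  have layer := lintegral_comp_eq_lintegral_meas_lt_mul (volume : Measure Ω)
    (f := fun ω => |X ω|) (Eventually.of_forall fun ω => abs_nonneg _)
    hX.abs.aemeasurable g_intble
    ((ae_restrict_iff' measurableSet_Ioi).mpr (Eventually.of_forall fun t ht => by
      have : (0:ℝ) < t := ht
      positivity))
  have inner : ∀ x : ℝ, 0 ≤ x → ∫ t in (0:ℝ)..x, κ * t^(κ-1) = x ^ κ := by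
    intro x hx
    rw [intervalIntegral.integral_const_mul, integral_rpow (Or.inl (by linarith))]
    rw [sub_add_cancel, Real.zero_rpow (ne_of_gt hκ)]
    field_simp
    ring
  rw [show (fun ω => ENNReal.ofReal (∫ t in (0:ℝ)..|X ω|, κ * t^(κ-1)))
      = fun ω => ENNReal.ofReal (|X ω| ^ κ) from funext fun ω => by
        rw [inner _ (abs_nonneg _)]] at layer
  have lhs_eq : ∫⁻ ω, ENNReal.ofReal (|X ω| ^ κ) = ENNReal.ofReal (∫ ω, |X ω| ^ κ) :=
    (ofReal_integral_eq_lintegral_ofReal hint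
      (Eventually.of_forall fun ω => by positivity)).symm
  have hup : ∫⁻ t in Ioi (0:ℝ), volume {a | t < |X a|} * ENNReal.ofReal (κ * t^(κ-1))
      ≤ ENNReal.ofReal (σ ^ κ) := by
    rw [← layer, lhs_eq]; exact ENNReal.ofReal_le_ofReal hmom
  have double : ∀ t : ℝ, 0 < t → volume {ω | t < |X ω|} = 2 * volume {ω | t < X ω} := by
    intro t ht
    have hset : {ω | t < |X ω|} = {ω | t < X ω} ∪ {ω | t < -X ω} := by
      ext ω; simp [lt_abs]
    have hdisj : Disjoint {ω | t < X ω} {ω | t < -X ω} := by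
      rw [Set.disjoint_left]; intro ω h1 h2
      simp only [Set.mem_setOf_eq] at h1 h2
      linarith
    have hmeasB : MeasurableSet {ω | t < -X ω} :=
      measurableSet_lt measurable_const hX.neg
    rw [hset, measure_union hdisj hmeasB, ← hsymm' t, two_mul]
  set ψ : ℝ → ℝ := fun t => 2*(c - r*t)*(κ*t^(κ-1)) with hψ
  have hIoc_meas : MeasurableSet (Ioc (0:ℝ) T) := measurableSet_Ioc
  have hmono : ∫⁻ t in Ioi (0:ℝ), (Ioc (0:ℝ) T).indicator (fun t => ENNReal.ofReal (ψ t)) t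
      ≤ ∫⁻ t in Ioi (0:ℝ), volume {a | t < |X a|} * ENNReal.ofReal (κ * t^(κ-1)) := by
    refine lintegral_mono_ae ((ae_restrict_iff' measurableSet_Ioi).mpr
      (Eventually.of_forall fun t ht => ?_))
    have ht0 : (0:ℝ) < t := ht
    by_cases htT : t ≤ T
    · have htIoc : t ∈ Ioc (0:ℝ) T := ⟨ht0, htT⟩
      rw [Set.indicator_of_mem htIoc]
      have hc1 : 0 ≤ c - r*t := by nlinarith
      have e1 : ENNReal.ofReal (ψ t)
          = ENNReal.ofReal (2*(c-r*t)) * ENNReal.ofReal (κ*t^(κ-1)) := by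
        rw [hψ, ← ENNReal.ofReal_mul (by positivity)]
      rw [e1, double t ht0]
      refine mul_le_mul_left ?_ _
      have h2 := hmin t htIoc
      have e2 : ENNReal.ofReal (2*(c-r*t)) = 2 * ENNReal.ofReal (c - r*t) := by
        rw [ENNReal.ofReal_mul (by norm_num : (0:ℝ) ≤ 2), ENNReal.ofReal_ofNat]
      rw [e2]
      refine mul_le_mul_right ?_ 2
      calc ENNReal.ofReal (c - r*t)
          ≤ ENNReal.ofReal ((volume {ω | t < X ω}).toReal) := ENNReal.ofReal_le_ofReal h2
        _ = volume {ω | t < X ω} := ENNReal.ofReal_toReal (measure_ne_top _ _)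
    · rw [Set.indicator_of_notMem (fun hmem => htT hmem.2)]
      exact zero_le
  have hre : ∫⁻ t in Ioi (0:ℝ), (Ioc (0:ℝ) T).indicator (fun t => ENNReal.ofReal (ψ t)) t
      = ∫⁻ t in Ioc (0:ℝ) T, ENNReal.ofReal (ψ t) := by
    rw [lintegral_indicator hIoc_meas, Measure.restrict_restrict hIoc_meas,
      Set.inter_eq_left.mpr Ioc_subset_Ioi_self]
  have i1 : IntegrableOn (fun t : ℝ => t^(κ-1)) (Ioc 0 T) volume := by
    have h := intervalIntegrable_rpow' (a:=0) (b:=T) (by linarith : (-1:ℝ) < κ-1)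
    rwa [intervalIntegrable_iff, uIoc_of_le hT.le] at h
  have i2 : IntegrableOn (fun t : ℝ => t^κ) (Ioc 0 T) volume := by
    have h := intervalIntegrable_rpow' (a:=0) (b:=T) (by linarith : (-1:ℝ) < κ)
    rwa [intervalIntegrable_iff, uIoc_of_le hT.le] at h
  have hsplit : ∀ t ∈ Ioc (0:ℝ) T, 2*c*κ*t^(κ-1) - 2*r*κ*t^κ = ψ t := by
    intro t ht
    have ht0 : 0 < t := ht.1
    have e : t ^ κ = t^(κ-1) * t := by
      have := Real.rpow_add_one (ne_of_gt ht0) (κ-1)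
      rwa [sub_add_cancel] at this
    rw [hψ, e]; ring
  have iψ : IntegrableOn ψ (Ioc 0 T) volume := by
    refine ((i1.const_mul (2*c*κ)).sub (i2.const_mul (2*r*κ))).congr
      ((ae_restrict_iff' hIoc_meas).mpr (Eventually.of_forall fun t ht => hsplit t ht))
  have hnnψ : 0 ≤ᵐ[volume.restrict (Ioc (0:ℝ) T)] ψ :=
    (ae_restrict_iff' hIoc_meas).mpr (Eventually.of_forall fun t ht => by
      have ht0 : 0 < t := ht.1
      have hc1 : 0 ≤ c - r*t := by nlinarith [ht.2]
      have : (0:ℝ) ≤ t^(κ-1) := Real.rpow_nonneg ht0.le _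
      rw [hψ]; positivity)
  have hval : ∫⁻ t in Ioc (0:ℝ) T, ENNReal.ofReal (ψ t)
      = ENNReal.ofReal (∫ t in Ioc (0:ℝ) T, ψ t) :=
    (ofReal_integral_eq_lintegral_ofReal iψ hnnψ).symm
  have hreal : ∫ t in Ioc (0:ℝ) T, ψ t = 2*c*T^κ - 2*r*κ*T^(κ+1)/(κ+1) := by
    have e : ∫ t in Ioc (0:ℝ) T, ψ t
        = ∫ t in Ioc (0:ℝ) T, (2*c*κ*t^(κ-1) - 2*r*κ*t^κ) :=
      (integral_congr_ae ((ae_restrict_iff' hIoc_meas).mpr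
        (Eventually.of_forall fun t ht => hsplit t ht))).symm
    have j1 := intervalIntegrable_rpow' (a:=0) (b:=T) (by linarith : (-1:ℝ) < κ-1)
    have j2 := intervalIntegrable_rpow' (a:=0) (b:=T) (by linarith : (-1:ℝ) < κ)
    rw [e, ← intervalIntegral.integral_of_le hT.le,
      intervalIntegral.integral_sub (j1.const_mul _) (j2.const_mul _),
      intervalIntegral.integral_const_mul, intervalIntegral.integral_const_mul,
      integral_rpow (Or.inl (by linarith : (-1:ℝ) < κ-1)),
      integral_rpow (Or.inl (by linarith : (-1:ℝ) < κ)),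
      sub_add_cancel, Real.zero_rpow (ne_of_gt hκ), Real.zero_rpow (ne_of_gt hκ1)]
    field_simp
    ring
  have final : ENNReal.ofReal (2*c*T^κ - 2*r*κ*T^(κ+1)/(κ+1)) ≤ ENNReal.ofReal (σ^κ) := by
    calc ENNReal.ofReal (2*c*T^κ - 2*r*κ*T^(κ+1)/(κ+1))
        = ∫⁻ t in Ioc (0:ℝ) T, ENNReal.ofReal (ψ t) := by rw [hval, hreal]
      _ = ∫⁻ t in Ioi (0:ℝ), (Ioc (0:ℝ) T).indicator (fun t => ENNReal.ofReal (ψ t)) t :=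
          hre.symm
      _ ≤ _ := hmono
      _ ≤ _ := hup
  exact (ENNReal.ofReal_le_ofReal_iff (by positivity)).mp final


lemma strict_of_le_meas {Ω : Type*} [MeasureSpace Ω] (X Y : Ω → ℝ)
    (hsymm : ∀ t : ℝ, volume {ω | t ≤ X ω} = volume {ω | t ≤ Y ω}) :
    ∀ t : ℝ, volume {ω | t < X ω} = volume {ω | t < Y ω} := by
  have key : ∀ Z : Ω → ℝ, ∀ t : ℝ,
      volume {ω | t < Z ω} = ⨆ n : ℕ, volume {ω | t + 1/(n+1) ≤ Z ω} := by
    intro Z t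
    have hmono : Monotone (fun n : ℕ => {ω | t + 1/((n:ℝ)+1) ≤ Z ω}) := by
      intro n m hnm ω hω
      simp only [mem_setOf_eq] at hω ⊢
      have h1 : 1/((m:ℝ)+1) ≤ 1/((n:ℝ)+1) := by
        apply one_div_le_one_div_of_le (by positivity)
        have : ((n:ℝ)) ≤ (m:ℝ) := Nat.cast_le.mpr hnm
        linarith
      linarith
    have hset : {ω | t < Z ω} = ⋃ n : ℕ, {ω | t + 1/((n:ℝ)+1) ≤ Z ω} := by
      ext ω
      simp only [mem_iUnion, mem_setOf_eq]
      constructor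
      · intro h
        obtain ⟨n, hn⟩ := exists_nat_one_div_lt (sub_pos.mpr h)
        exact ⟨n, by linarith⟩
      · rintro ⟨n, hn⟩
        have : (0:ℝ) < 1/((n:ℝ)+1) := by positivity
        linarith
    rw [hset, hmono.measure_iUnion]
  intro t
  rw [key X t, key Y t]
  exact iSup_congr fun n => hsymm _

lemma exists_subgradient {G : ℝ → ℝ} {t₀ : ℝ} (ht₀ : 0 < t₀)
    (hconv : ConvexOn ℝ (Set.Ioi 0) G)
    (hanti : ∀ ⦃a b : ℝ⦄, 0 < a → a ≤ b → G b ≤ G a) :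
    ∃ s : ℝ, s ≤ 0 ∧ ∀ t, 0 < t → G t₀ + s*(t - t₀) ≤ G t := by
  set Sl : Set ℝ := (fun u => (G t₀ - G u)/(t₀ - u)) '' (Ioo 0 t₀) with hSl
  have hne : Sl.Nonempty := ⟨_, ⟨t₀/2, ⟨half_pos ht₀, half_lt_self ht₀⟩, rfl⟩⟩
  have hub : ∀ x ∈ Sl, x ≤ (G (t₀+1) - G t₀)/((t₀+1) - t₀) := by
    rintro x ⟨u, hu, rfl⟩
    exact hconv.slope_mono_adjacent (hu.1 : u ∈ Ioi 0)
      (show t₀+1 ∈ Ioi (0:ℝ) by simp; linarith) hu.2 (by linarith)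
  have hbdd : BddAbove Sl := ⟨_, hub⟩
  refine ⟨sSup Sl, ?_, ?_⟩
  · refine csSup_le hne ?_
    rintro x ⟨u, hu, rfl⟩
    apply div_nonpos_of_nonpos_of_nonneg
    · have := hanti hu.1 hu.2.le
      linarith
    · linarith [hu.2]
  · intro t ht
    rcases lt_trichotomy t t₀ with h | h | h
    · have hs : (G t₀ - G t)/(t₀ - t) ≤ sSup Sl := le_csSup hbdd ⟨t, ⟨ht, h⟩, rfl⟩
      rw [div_le_iff₀ (by linarith)] at hs
      nlinarith
    · subst h; simp
    · have hs : sSup Sl ≤ (G t - G t₀)/(t - t₀) := by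
        refine csSup_le hne ?_
        rintro x ⟨u, hu, rfl⟩
        exact hconv.slope_mono_adjacent (hu.1 : u ∈ Ioi 0)
          (show t ∈ Ioi (0:ℝ) from ht) hu.2 h
      rw [le_div_iff₀ (by linarith)] at hs
      nlinarith


/-- Sign failure probability for a symmetric unimodal random variable `g` centered at
`μ ≠ 0` with `E[|g - μ|^κ] ≤ σ^κ`: with `S = |μ|/σ`, the failure probability
`q = P(sign g ≠ sign μ)` satisfies the two-regime Gauss-type bound, and `q < 1/2`. -/
theorem stmt_14 {Ω : Type*} [MeasureSpace Ω] (hP : IsProbabilityMeasure (volume : Measure Ω))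
    (g : Ω → ℝ) (μ σ κ : ℝ) (hκ : 0 < κ) (hμ : μ ≠ 0) (hσ : 0 < σ)
    (hmeas : AEMeasurable g)
    (hsymm : ∀ t : ℝ, volume {ω | t ≤ g ω - μ} = volume {ω | t ≤ μ - g ω})
    (hconv : ConvexOn ℝ (Set.Iio μ) (fun t => (volume {ω | g ω ≤ t}).toReal))
    (hconc : ConcaveOn ℝ (Set.Ioi μ) (fun t => (volume {ω | g ω ≤ t}).toReal))
    (hint : Integrable (fun ω => |g ω - μ| ^ κ))
    (hmom : ∫ ω, |g ω - μ| ^ κ ≤ σ ^ κ)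
    (S : ℝ) (hS : S = |μ| / σ)
    (q : ℝ) (hq : q = (volume {ω | Real.sign (g ω) ≠ Real.sign μ}).toReal) :
    (κ ^ κ / (κ + 1) ^ (κ - 1) ≤ S ^ κ →
      q ≤ (1 / 2) * (κ / (κ + 1)) ^ κ / S ^ κ) ∧
    (S ^ κ ≤ κ ^ κ / (κ + 1) ^ (κ - 1) →
      q ≤ 1 / 2 - (1 / 2) * S / (κ + 1) ^ (1 / κ)) ∧
    q < 1 / 2 := by
  have hκ1 : (0:ℝ) < κ + 1 := by linarith
  obtain ⟨g₁, hg₁m, hg₁e⟩ : ∃ g₁ : Ω → ℝ, Measurable g₁ ∧ g =ᵐ[volume] g₁ :=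
    ⟨hmeas.mk g, hmeas.measurable_mk, hmeas.ae_eq_mk⟩
  set m : ℝ := |μ| with hm
  have hm0 : 0 < m := abs_pos.mpr hμ
  set X : Ω → ℝ := fun ω => g₁ ω - μ with hXdef
  have hXm : Measurable X := hg₁m.sub measurable_const
  have hcongr : ∀ s : Set ℝ, volume {ω | g ω ∈ s} = volume {ω | g₁ ω ∈ s} := by
    intro s
    apply measure_congr
    filter_upwards [hg₁e] with ω hω
    exact congrArg s hω
  -- symmetry for X, strict version
  have hsymm₁ : ∀ t : ℝ, volume {ω | t ≤ X ω} = volume {ω | t ≤ -X ω} := by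
    intro t
    have e1 : {ω | t ≤ X ω} = {ω | g₁ ω ∈ {x | t ≤ x - μ}} := rfl
    have e2 : {ω | t ≤ -X ω} = {ω | g₁ ω ∈ {x | t ≤ μ - x}} := by
      ext ω; simp only [Set.mem_setOf_eq, hXdef, neg_sub]
    rw [e1, e2, ← hcongr, ← hcongr]
    exact hsymm t
  have hsymm' : ∀ t : ℝ, volume {ω | t < X ω} = volume {ω | t < -X ω} :=
    strict_of_le_meas X (fun ω => -X ω) hsymm₁
  -- moment transfer
  have hint₁ : Integrable (fun ω => |X ω| ^ κ) := by
    refine hint.congr ?_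
    filter_upwards [hg₁e] with ω hω
    rw [hXdef]; simp [hω]
  have hmom₁ : ∫ ω, |X ω| ^ κ ≤ σ ^ κ := by
    refine le_trans (le_of_eq ?_) hmom
    apply MeasureTheory.integral_congr_ae
    filter_upwards [hg₁e] with ω hω
    rw [hXdef]; simp [hω]
  -- CDF and tail
  set F : ℝ → ℝ := fun t => (volume {ω | g₁ ω ≤ t}).toReal with hFdef
  have hFc : ConcaveOn ℝ (Set.Ioi μ) F := by
    have e : (fun t => (volume {ω | g ω ≤ t}).toReal) = F := by
      funext t; rw [hFdef]; congr 1; exact hcongr {x | x ≤ t}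
    rwa [e] at hconc
  set G : ℝ → ℝ := fun t => (volume {ω | t < X ω}).toReal with hGdef
  have hGF : ∀ t, G t = 1 - F (μ + t) := by
    intro t
    have e : {ω | t < X ω} = {ω | g₁ ω ≤ μ + t}ᶜ := by
      ext ω
      simp only [Set.mem_compl_iff, Set.mem_setOf_eq, hXdef, not_le, lt_sub_iff_add_lt]
      constructor <;> intro h <;> linarith
    show (volume {ω | t < X ω}).toReal = 1 - (volume {ω | g₁ ω ≤ μ + t}).toReal
    rw [e, measure_compl (measurableSet_le hg₁m measurable_const) (measure_ne_top _ _),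
      measure_univ, ENNReal.toReal_sub_of_le prob_le_one ENNReal.one_ne_top, ENNReal.toReal_one]
  have hGconv : ConvexOn ℝ (Set.Ioi 0) G := by
    refine ⟨convex_Ioi 0, fun x hx y hy a b ha hb hab => ?_⟩
    have hx' : μ + x ∈ Set.Ioi μ := by simp only [Set.mem_Ioi] at hx ⊢; linarith
    have hy' : μ + y ∈ Set.Ioi μ := by simp only [Set.mem_Ioi] at hy ⊢; linarith
    have key := hFc.2 hx' hy' ha hb hab
    simp only [smul_eq_mul] at key ⊢
    have e : a * (μ + x) + b * (μ + y) = μ + (a*x + b*y) := by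
      linear_combination μ * hab
    rw [e] at key
    rw [hGF, hGF, hGF]
    linarith [key]
  have hGanti : ∀ ⦃a b : ℝ⦄, 0 < a → a ≤ b → G b ≤ G a := by
    intro a b _ hab
    apply ENNReal.toReal_mono (measure_ne_top _ _)
    exact measure_mono (fun ω hω => lt_of_le_of_lt hab hω)
  have hGnn : ∀ t, 0 ≤ G t := fun t => ENNReal.toReal_nonneg
  have hGhalf : ∀ t, 0 < t → G t ≤ 1/2 := by
    intro t ht
    set A := {ω | t < X ω}
    set B := {ω | t < -X ω}
    have hdisj : Disjoint A B := by
      rw [Set.disjoint_left]; intro ω h1 h2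
      simp only [A, B, Set.mem_setOf_eq] at h1 h2
      linarith
    have hmeasB : MeasurableSet B := measurableSet_lt measurable_const hXm.neg
    have hsum : volume A + volume B ≤ 1 := by
      rw [← measure_union hdisj hmeasB]
      exact prob_le_one
    have hAB : volume A = volume B := hsymm' t
    have h1 : (volume A).toReal + (volume B).toReal ≤ 1 := by
      rw [← ENNReal.toReal_add (measure_ne_top _ _) (measure_ne_top _ _)]
      calc ((volume A + volume B)).toReal ≤ (1 : ℝ≥0∞).toReal :=
            ENNReal.toReal_mono ENNReal.one_ne_top hsum
        _ = 1 := ENNReal.toReal_one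
    have hGt : G t = (volume A).toReal := rfl
    have h2 : (volume B).toReal = (volume A).toReal := by rw [hAB]
    linarith
  -- q as a tail value
  have hqX : q = (volume {ω | m ≤ X ω}).toReal := by
    rcases lt_or_gt_of_ne hμ with hneg | hpos
    · have hsμ : Real.sign μ = -1 := Real.sign_of_neg hneg
      have hset : {ω | Real.sign (g ω) ≠ Real.sign μ} = {ω | g ω ∈ {x | m ≤ x - μ}} := by
        ext ω
        simp only [Set.mem_setOf_eq, hsμ]
        rw [hm, abs_of_neg hneg]
        constructor
        · intro h
          rcases lt_trichotomy (g ω) 0 with h1 | h1 | h1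
          · exact absurd (Real.sign_of_neg h1) h
          · rw [h1]; linarith
          · linarith
        · intro h
          have h0 : 0 ≤ g ω := by linarith
          rcases eq_or_lt_of_le h0 with h1 | h1
          · rw [← h1, Real.sign_zero]; norm_num
          · rw [Real.sign_of_pos h1]; norm_num
      rw [hq, hset, hcongr]
      rfl
    · have hsμ : Real.sign μ = 1 := Real.sign_of_pos hpos
      have hset : {ω | Real.sign (g ω) ≠ Real.sign μ} = {ω | m ≤ μ - g ω} := by
        ext ω
        simp only [Set.mem_setOf_eq, hsμ]
        rw [hm, abs_of_pos hpos]
        constructor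
        · intro h
          rcases lt_trichotomy (g ω) 0 with h1 | h1 | h1
          · linarith
          · rw [h1]; linarith
          · exact absurd (Real.sign_of_pos h1) h
        · intro h
          have h0 : g ω ≤ 0 := by linarith
          rcases eq_or_lt_of_le h0 with h1 | h1
          · rw [h1, Real.sign_zero]; norm_num
          · rw [Real.sign_of_neg h1]; norm_num
      have e1 : {ω | m ≤ μ - g ω} = {ω | g ω ∈ {x | m ≤ μ - x}} := rfl
      have e2 : {ω | m ≤ g ω - μ} = {ω | g ω ∈ {x | m ≤ x - μ}} := rfl
      have hstep : volume {ω | m ≤ μ - g ω} = volume {ω | m ≤ g ω - μ} := (hsymm m).symm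
      rw [hq, hset, hstep, e2, hcongr]
      rfl
  have hqG : ∀ t, 0 < t → t < m → q ≤ G t := by
    intro t ht htm
    rw [hqX]
    apply ENNReal.toReal_mono (measure_ne_top _ _)
    exact measure_mono (fun ω hω => lt_of_lt_of_le htm hω)
  -- per-point bounds
  have hbounds : ∀ t₀, 0 < t₀ → t₀ < m →
      q ≤ 1/2 * (κ/(κ+1))^κ * σ^κ / t₀^κ ∧
      (t₀/σ ≤ κ * (κ+1)^(1/κ) / (κ+1) → q ≤ 1/2 - t₀ / (2*σ*(κ+1)^(1/κ))) := by
    intro t₀ ht₀ ht₀m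
    obtain ⟨s, hs0, hmin⟩ := exists_subgradient ht₀ hGconv hGanti
    obtain ⟨r, hr⟩ : ∃ r : ℝ, r = -s := ⟨-s, rfl⟩
    have hr0 : 0 ≤ r := by rw [hr]; linarith
    have hsr : s = -r := by rw [hr]; ring
    obtain ⟨q₀, hq₀⟩ : ∃ x : ℝ, x = G t₀ := ⟨_, rfl⟩
    have hq₀nn : 0 ≤ q₀ := by rw [hq₀]; exact hGnn t₀
    have hqq₀ : q ≤ q₀ := by rw [hq₀]; exact hqG t₀ ht₀ ht₀m
    have hhalf : q₀ + r * t₀ ≤ 1/2 := by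
      refine le_of_forall_pos_le_add fun ε hε => ?_
      obtain ⟨u, hu⟩ : ∃ u : ℝ, u = min (t₀/2) (ε/(r+1)) := ⟨_, rfl⟩
      have hu0 : 0 < u := by
        rw [hu]; exact lt_min (by linarith) (by positivity)
      have h1 := hmin u hu0
      have h2 := hGhalf u hu0
      have h3 : r * u ≤ ε := by
        have h4 : u ≤ ε/(r+1) := by rw [hu]; exact min_le_right _ _
        have h5 : r * u ≤ r * (ε/(r+1)) := mul_le_mul_of_nonneg_left h4 hr0
        have h6 : r * (ε/(r+1)) ≤ ε := by
          rw [mul_div_assoc', div_le_iff₀ (by positivity)]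
          nlinarith
        linarith
      have e : G t₀ + s * (u - t₀) = q₀ + r * t₀ - r * u := by
        rw [hsr, hq₀]; ring
      have h7 : q₀ + r * t₀ - r * u ≤ 1/2 := by rw [← e]; linarith
      linarith
    by_cases hrz : r = 0
    · have hq₀0 : q₀ = 0 := by
        by_contra hne
        have hq₀pos : 0 < q₀ := lt_of_le_of_ne hq₀nn (Ne.symm hne)
        obtain ⟨T, hT⟩ : ∃ T : ℝ, T = (σ^κ/q₀) ^ (1/κ) := ⟨_, rfl⟩
        have hTpos : 0 < T := by
          rw [hT]; exact Real.rpow_pos_of_pos (by positivity) _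
        have hTκ : T ^ κ = σ^κ/q₀ := by
          rw [hT, one_div, Real.rpow_inv_rpow (by positivity) (ne_of_gt hκ)]
        have hminT : ∀ t ∈ Set.Ioc (0:ℝ) T, q₀ - 0*t ≤ (volume {ω | t < X ω}).toReal := by
          intro t ht'
          have h := hmin t ht'.1
          have e : G t₀ + s * (t - t₀) = q₀ - r * (t - t₀) := by
            rw [hsr, hq₀]; ring
          have hGt : G t = (volume {ω | t < X ω}).toReal := rfl
          rw [hrz] at e
          linarith [h, e]
        have hkey := key_integral hP X hXm hκ hσ hsymm' hint₁ hmom₁ le_rfl hTpos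
          (by rw [zero_mul, sub_zero]; exact hq₀nn) hminT
        rw [hTκ] at hkey
        have e2 : 2*q₀*(σ^κ/q₀) = 2*σ^κ := by field_simp [hne]
        have e3 : 2*0*κ*T^(κ+1)/(κ+1) = 0 := by ring
        linarith [Real.rpow_pos_of_pos hσ κ, hkey, e2, e3]
      constructor
      · have hpos : (0:ℝ) ≤ 1/2 * (κ/(κ+1))^κ * σ^κ / t₀^κ := by positivity
        linarith
      · intro hreg
        have hE : (0:ℝ) < (κ+1)^(1/κ) := by positivity
        have hle : t₀ / (2*σ*(κ+1)^(1/κ)) ≤ 1/2 := by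
          rw [div_le_iff₀ (by positivity)]
          rw [div_le_div_iff₀ hσ hκ1] at hreg
          nlinarith
        linarith
    · have hrpos : 0 < r := lt_of_le_of_ne hr0 (Ne.symm hrz)
      obtain ⟨T, hT⟩ : ∃ T : ℝ, T = t₀ + q₀/r := ⟨_, rfl⟩
      have hTt₀ : t₀ ≤ T := by
        rw [hT]; exact le_add_of_nonneg_right (by positivity)
      have hTpos : 0 < T := lt_of_lt_of_le ht₀ hTt₀
      have hrT : r * T = q₀ + r * t₀ := by
        rw [hT]; field_simp [hrz]; ring
      have hminT : ∀ t ∈ Set.Ioc (0:ℝ) T, r*T - r*t ≤ (volume {ω | t < X ω}).toReal := by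
        intro t ht'
        have h := hmin t ht'.1
        have e : G t₀ + s * (t - t₀) = r*T - r*t := by
          rw [hsr, hrT, ← hq₀]; ring
        linarith [e ▸ h]
      have hkey := key_integral hP X hXm hκ hσ hsymm' hint₁ hmom₁ hr0 hTpos
        (by linarith : (0:ℝ) ≤ r*T - r*T) hminT
      have hmomc : 2*r*T^(κ+1) ≤ (κ+1)*σ^κ := by
        have e : 2*(r*T)*T^κ - 2*r*κ*T^(κ+1)/(κ+1) = 2*r*T^(κ+1)/(κ+1) := by
          rw [Real.rpow_add_one (ne_of_gt hTpos)]
          field_simp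
          ring
        rw [e, div_le_iff₀ hκ1] at hkey
        linarith
      have hq₀eq : q₀ = r * (T - t₀) := by
        rw [hT]; field_simp; ring
      constructor
      · have hA := coreA hκ hσ hr0 ht₀ hTt₀ hmomc
        linarith
      · intro hreg
        have hrT2 : r * T ≤ 1/2 := by rw [hrT]; linarith
        have hB := coreB hκ hσ hrpos ht₀ hTt₀ hrT2 hmomc hreg
        linarith
  -- limits as t₀ → m
  have hS0 : 0 < S := by rw [hS]; positivity
  have hEpos : (0:ℝ) < (κ+1)^(1/κ) := by positivity
  have hmκ : (0:ℝ) < m ^ κ := Real.rpow_pos_of_pos hm0 κ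
  have hAm : q ≤ 1/2 * (κ/(κ+1))^κ * σ^κ / m^κ := by
    have cont : ContinuousAt (fun t : ℝ => 1/2 * (κ/(κ+1))^κ * σ^κ / t^κ) m := by
      have h1 : ContinuousAt (fun t : ℝ => t^κ) m :=
        Real.continuousAt_rpow_const m κ (Or.inl (ne_of_gt hm0))
      exact continuousAt_const.div h1 (ne_of_gt hmκ)
    have tends : Tendsto (fun t : ℝ => 1/2 * (κ/(κ+1))^κ * σ^κ / t^κ)
        (nhdsWithin m (Set.Iio m)) (nhds (1/2 * (κ/(κ+1))^κ * σ^κ / m^κ)) :=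
      cont.tendsto.mono_left nhdsWithin_le_nhds
    refine ge_of_tendsto tends ?_
    filter_upwards [Ioo_mem_nhdsLT_of_mem (show m ∈ Set.Ioc 0 m from ⟨hm0, le_refl m⟩)]
      with t ht
    exact (hbounds t ht.1 ht.2).1
  have hBm : m/σ ≤ κ * (κ+1)^(1/κ) / (κ+1) → q ≤ 1/2 - m / (2*σ*(κ+1)^(1/κ)) := by
    intro hreg
    have cont : ContinuousAt (fun t : ℝ => 1/2 - t / (2*σ*(κ+1)^(1/κ))) m :=
      (continuous_const.sub (continuous_id.div_const _)).continuousAt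
    have tends := cont.tendsto.mono_left (nhdsWithin_le_nhds (s := Set.Iio m))
    refine ge_of_tendsto tends ?_
    filter_upwards [Ioo_mem_nhdsLT_of_mem (show m ∈ Set.Ioc 0 m from ⟨hm0, le_refl m⟩)]
      with t ht
    refine (hbounds t ht.1 ht.2).2 ?_
    calc t/σ ≤ m/σ := by gcongr; exact ht.2.le
      _ ≤ _ := hreg
  have hthr' : (κ/(κ+1))^κ * (κ+1) = κ^κ/(κ+1)^(κ-1) := by
    rw [Real.div_rpow hκ.le hκ1.le, Real.rpow_sub hκ1, Real.rpow_one]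
    have h1 : ((κ+1):ℝ)^κ ≠ 0 := (Real.rpow_pos_of_pos hκ1 κ).ne'
    field_simp
  have hreg_of : S ^ κ ≤ κ ^ κ / (κ + 1) ^ (κ - 1) →
      m/σ ≤ κ * (κ+1)^(1/κ) / (κ+1) := by
    intro hreg
    have hRHSpos : (0:ℝ) < κ * (κ+1)^(1/κ) / (κ+1) := by positivity
    by_contra hlt
    push_neg at hlt
    have h1 : (κ * (κ+1)^(1/κ) / (κ+1)) ^ κ < (m/σ) ^ κ :=
      Real.rpow_lt_rpow hRHSpos.le hlt hκ
    have h2 : (κ * (κ+1)^(1/κ) / (κ+1)) ^ κ = κ ^ κ / (κ + 1) ^ (κ - 1) := by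
      rw [Real.div_rpow (by positivity) hκ1.le, Real.mul_rpow hκ.le (by positivity),
        one_div, Real.rpow_inv_rpow hκ1.le (ne_of_gt hκ), Real.rpow_sub hκ1, Real.rpow_one]
      have h1' : ((κ+1):ℝ)^κ ≠ 0 := (Real.rpow_pos_of_pos hκ1 κ).ne'
      field_simp
    rw [h2, ← hS] at h1
    linarith
  have hconvS : 1/2 * (κ/(κ+1))^κ / S^κ = 1/2 * (κ/(κ+1))^κ * σ^κ / m^κ := by
    rw [hS, Real.div_rpow hm0.le hσ.le]
    have hσκ : (0:ℝ) < σ^κ := Real.rpow_pos_of_pos hσ κ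
    field_simp
  have hSκpos : (0:ℝ) < S^κ := Real.rpow_pos_of_pos hS0 κ
  refine ⟨fun _ => ?_, fun hreg => ?_, ?_⟩
  · rw [hconvS]; exact hAm
  · have h := hBm (hreg_of hreg)
    have e : 1/2 - 1/2 * S / (κ+1)^(1/κ) = 1/2 - m/(2*σ*(κ+1)^(1/κ)) := by
      rw [hS]
      field_simp
    rw [show (1:ℝ)/2 - 1/2*S/(κ+1)^(1/κ) = 1/2 - m/(2*σ*(κ+1)^(1/κ)) from e]
    exact h
  · rcases le_total (S^κ) (κ^κ/(κ+1)^(κ-1)) with hc | hc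
    · have h := hBm (hreg_of hc)
      have hpos : 0 < m / (2*σ*(κ+1)^(1/κ)) := by positivity
      linarith
    · have h := hAm
      rw [← hconvS] at h
      have hCκ : (0:ℝ) < (κ/(κ+1))^κ := Real.rpow_pos_of_pos (by positivity) κ
      have h2 : 1/2 * (κ/(κ+1))^κ / S^κ ≤ 1/2 / (κ+1) := by
        have hc' : (κ/(κ+1))^κ * (κ+1) ≤ S^κ := by rw [hthr']; exact hc
        rw [div_le_div_iff₀ hSκpos hκ1]
        calc 1/2 * (κ/(κ+1))^κ * (κ+1) = 1/2 * ((κ/(κ+1))^κ * (κ+1)) := by ring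
          _ ≤ 1/2 * S^κ := by linarith only [hc']
      have h3 : 1/2/(κ+1) < 1/2 := div_lt_self (by norm_num) (by linarith only [hκ])
      linarith only [h, h2, h3]
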